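/- For all natural numbers t ≥ 1 and m ≥ 1, there exist a natural number d with d = t·⌈t/ln 2⌉·⌈log₂(4m)⌉ and finite sets S₁, …, S_m ⊆ {0, 1, …, d−1} such that |Sᵢ| = t for every i, and for every i, ∑_{j < i} 2^{|Sᵢ ∩ Sⱼ|} ≤ m − 1. -/
import Mathlib

open Finset

lemma weak_design_core (t a n : ℕ) (ha : 1 ≤ a) (hta : (t : ℝ) ≤ a * Real.log 2)
    (prev : Fin n → Finset (Fin t × Fin a)) (hprev : ∀ j, (prev j).card ≤ t) :
    ∃ S : Finset (Fin t × Fin a), S.card = t ∧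
      ∑ j, 2 ^ ((S ∩ prev j).card) ≤ 2 * n := by
  classical
  set G : (Fin t → Fin a) → Finset (Fin t × Fin a) :=
    fun f => univ.image (fun b => (b, f b)) with hG
  have hGcard : ∀ f, (G f).card = t := by
    intro f
    rw [hG]
    rw [Finset.card_image_of_injective _ (fun b c h => (Prod.mk.injEq _ _ _ _).mp h |>.1)]
    simp
  have hint : ∀ (f : Fin t → Fin a) (T : Finset (Fin t × Fin a)),
      (G f ∩ T).card = (univ.filter (fun b => (b, f b) ∈ T)).card := by
    intro f T
    apply Finset.card_bij (fun x _ => x.1)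
    · intro x hx
      simp only [mem_inter, hG, mem_image, mem_univ, true_and] at hx
      obtain ⟨⟨b, hb⟩, hxT⟩ := hx
      simp only [mem_filter, mem_univ, true_and]
      subst hb; exact hxT
    · intro x hx y hy h
      simp only [mem_inter, hG, mem_image, mem_univ, true_and] at hx hy
      obtain ⟨⟨b, hb⟩, _⟩ := hx; obtain ⟨⟨c, hc⟩, _⟩ := hy
      subst hb; subst hc; simp only at h; rw [h]
    · intro b hb
      simp only [mem_filter, mem_univ, true_and] at hb
      exact ⟨(b, f b), by simp [hG, hb], rfl⟩
  -- c_b fiber count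
  have hfiber : ∀ (T : Finset (Fin t × Fin a)) (b : Fin t),
      (univ.filter (fun v => (b, v) ∈ T)).card = (T.filter (fun x => x.1 = b)).card := by
    intro T b
    apply Finset.card_bij (fun v _ => (b, v))
    · intro v hv
      simp only [mem_filter, mem_univ, true_and] at hv ⊢
      exact ⟨hv, trivial⟩
    · intro v _ w _ h
      simpa using h
    · rintro ⟨x1, x2⟩ hx
      simp only [mem_filter] at hx
      obtain ⟨hT, rfl⟩ := hx
      exact ⟨x2, by simpa using hT, rfl⟩
  have hkey : ∀ T : Finset (Fin t × Fin a),
      ∑ f : Fin t → Fin a, 2 ^ ((G f ∩ T).card)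
        = ∏ b : Fin t, (a + (T.filter (fun x => x.1 = b)).card) := by
    intro T
    have h1 : ∀ f : Fin t → Fin a, (2:ℕ) ^ ((G f ∩ T).card)
        = ∏ b : Fin t, (if (b, f b) ∈ T then 2 else 1) := by
      intro f
      rw [hint f T, Finset.prod_ite, Finset.prod_const, Finset.prod_const, one_pow, mul_one]
    simp_rw [h1]
    rw [← Fintype.prod_sum (fun b v => if (b, v) ∈ T then (2:ℕ) else 1)]
    congr 1
    funext b
    have h2 : ∀ v : Fin a, (if (b, v) ∈ T then (2:ℕ) else 1)
        = 1 + (if (b, v) ∈ T then (1:ℕ) else 0) := by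
      intro v; split <;> simp
    rw [Finset.sum_congr rfl (fun v _ => h2 v), Finset.sum_add_distrib, Finset.sum_const,
      card_univ, Fintype.card_fin, smul_eq_mul, mul_one, ← Finset.card_filter]
    rw [hfiber T b]
  -- real bound on each product
  have hreal : ∀ j : Fin n,
      ((∏ b : Fin t, (a + ((prev j).filter (fun x => x.1 = b)).card) : ℕ) : ℝ)
        ≤ 2 * (a : ℝ) ^ t := by
    intro j
    have ha0 : (0:ℝ) < a := by exact_mod_cast ha
    have hsum : ∑ b : Fin t, (((prev j).filter (fun x => x.1 = b)).card : ℝ) ≤ t := by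
      have : ∑ b : Fin t, ((prev j).filter (fun x => x.1 = b)).card = (prev j).card :=
        (Finset.card_eq_sum_card_fiberwise (f := Prod.fst) (fun x _ => mem_univ x.1)).symm
      have h2 := hprev j
      exact_mod_cast (by omega : ∑ b : Fin t, ((prev j).filter (fun x => x.1 = b)).card ≤ t)
    push_cast
    have hstep : ∀ b : Fin t, ((a : ℝ) + ((prev j).filter (fun x => x.1 = b)).card)
        = a * (1 + ((prev j).filter (fun x => x.1 = b)).card / a) := by
      intro b; field_simp
    calc ∏ b : Fin t, ((a : ℝ) + ((prev j).filter (fun x => x.1 = b)).card)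
        = ∏ b : Fin t, (a : ℝ) * (1 + (((prev j).filter (fun x => x.1 = b)).card : ℝ) / (a:ℝ)) := by
          exact Finset.prod_congr rfl fun b _ => hstep b
      _ = (a : ℝ) ^ t * ∏ b : Fin t, (1 + (((prev j).filter (fun x => x.1 = b)).card : ℝ) / (a:ℝ)) := by
          rw [Finset.prod_mul_distrib, Finset.prod_const, card_univ, Fintype.card_fin]
      _ ≤ (a : ℝ) ^ t * ∏ b : Fin t, Real.exp ((((prev j).filter (fun x => x.1 = b)).card : ℝ) / (a:ℝ)) := by
          apply mul_le_mul_of_nonneg_left _ (by positivity)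
          apply Finset.prod_le_prod
          · intro b _; positivity
          · intro b _
            have := Real.add_one_le_exp ((((prev j).filter (fun x => x.1 = b)).card : ℝ) / a)
            linarith
      _ ≤ (a : ℝ) ^ t * 2 := by
          apply mul_le_mul_of_nonneg_left _ (by positivity)
          rw [← Real.exp_sum]
          calc Real.exp (∑ b : Fin t, (((prev j).filter (fun x => x.1 = b)).card : ℝ) / a)
              ≤ Real.exp (Real.log 2) := by
                apply Real.exp_le_exp.mpr
                rw [← Finset.sum_div]
                rw [div_le_iff₀ ha0]
                calc ∑ b : Fin t, (((prev j).filter (fun x => x.1 = b)).card : ℝ)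
                    ≤ t := hsum
                  _ ≤ a * Real.log 2 := hta
                  _ = Real.log 2 * a := by ring
            _ = 2 := Real.exp_log (by norm_num)
      _ = 2 * (a : ℝ) ^ t := by ring
  -- averaging
  have hex : ∃ f : Fin t → Fin a, ∑ j, 2 ^ ((G f ∩ prev j).card) ≤ 2 * n := by
    by_contra hcon
    push_neg at hcon
    have h1 : ((a ^ t : ℕ) : ℝ) * ((2 * n + 1 : ℕ) : ℝ)
        ≤ ∑ f : Fin t → Fin a, ((∑ j, 2 ^ ((G f ∩ prev j).card) : ℕ) : ℝ) := by
      have hcf : Fintype.card (Fin t → Fin a) = a ^ t := by simp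
      have := Finset.card_nsmul_le_sum (univ : Finset (Fin t → Fin a))
        (fun f => ((∑ j, 2 ^ ((G f ∩ prev j).card) : ℕ) : ℝ)) ((2 * n + 1 : ℕ) : ℝ)
        (fun f _ => Nat.cast_le.mpr (hcon f))
      rw [card_univ, hcf, nsmul_eq_mul] at this
      exact this
    have h2 : ∑ f : Fin t → Fin a, ((∑ j, 2 ^ ((G f ∩ prev j).card) : ℕ) : ℝ)
        ≤ (n : ℝ) * (2 * (a : ℝ) ^ t) := by
      have hswap : ∑ f : Fin t → Fin a, (∑ j, 2 ^ ((G f ∩ prev j).card) : ℕ)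
          = ∑ j, ∏ b : Fin t, (a + ((prev j).filter (fun x => x.1 = b)).card) := by
        rw [Finset.sum_comm]
        exact Finset.sum_congr rfl fun j _ => hkey (prev j)
      rw [← Nat.cast_sum, hswap, Nat.cast_sum]
      calc ∑ j : Fin n, ((∏ b : Fin t, (a + ((prev j).filter (fun x => x.1 = b)).card) : ℕ) : ℝ)
          ≤ ∑ _j : Fin n, 2 * (a : ℝ) ^ t := Finset.sum_le_sum fun j _ => hreal j
        _ = (n : ℝ) * (2 * (a : ℝ) ^ t) := by rw [Finset.sum_const, card_univ, Fintype.card_fin, nsmul_eq_mul]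
    have hat : (0:ℝ) < (a : ℝ) ^ t := by positivity
    have h3 := le_trans h1 h2
    push_cast at h3
    nlinarith
  obtain ⟨f, hf⟩ := hex
  exact ⟨G f, hGcard f, hf⟩

lemma weak_design_family (t a : ℕ) (ha : 1 ≤ a) (hta : (t : ℝ) ≤ a * Real.log 2) :
    ∀ n : ℕ, ∃ T : ℕ → Finset (Fin t × Fin a),
      (∀ i < n, (T i).card = t) ∧
      (∀ i < n, ∑ j ∈ Finset.range i, 2 ^ ((T i ∩ T j).card) ≤ 2 * i) := by
  intro n
  induction n with
  | zero => exact ⟨fun _ => ∅, fun i hi => absurd hi (by omega), fun i hi => absurd hi (by omega)⟩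
  | succ n ih =>
    obtain ⟨T, hc, hs⟩ := ih
    obtain ⟨S, hScard, hSsum⟩ := weak_design_core t a n ha hta (fun j : Fin n => T j)
      (fun j => le_of_eq (hc j j.2))
    classical
    refine ⟨fun i => if i = n then S else T i, ?_, ?_⟩
    · intro i hi
      by_cases h : i = n
      · simp [h, hScard]
      · simpa [h] using hc i (by omega)
    · intro i hi
      by_cases h : i = n
      · obtain rfl : n = i := h.symm
        have heq : ∑ j ∈ Finset.range n,
            2 ^ (((if n = n then S else T n) ∩ (if j = n then S else T j)).card)
            = ∑ j ∈ Finset.range n, 2 ^ ((S ∩ T j).card) := by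
          apply Finset.sum_congr rfl
          intro j hj
          have : j ≠ n := by have := Finset.mem_range.mp hj; omega
          simp [this]
        rw [heq, ← Fin.sum_univ_eq_sum_range (fun j => 2 ^ ((S ∩ T j).card)) n]
        exact hSsum
      · have heq : ∑ j ∈ Finset.range i,
            2 ^ (((if i = n then S else T i) ∩ (if j = n then S else T j)).card)
            = ∑ j ∈ Finset.range i, 2 ^ ((T i ∩ T j).card) := by
          apply Finset.sum_congr rfl
          intro j hj
          have : j ≠ n := by have := Finset.mem_range.mp hj; omega
          simp [h, this]
        rw [heq]
        exact hs i (by omega)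

/-- Lemma B.1 (Raz–Reingold–Vadhan, Lemma 17): existence of weak
(t,1)-designs S₁, …, S_m ⊆ [d], each of size t, with
d = t·⌈t/ln 2⌉·⌈log₂(4m)⌉ and ∑_{j<i} 2^{|Sᵢ ∩ Sⱼ|} ≤ m − 1 for every i. -/
theorem stmt_6 (t m : ℕ) (ht : 1 ≤ t) (hm : 1 ≤ m) :
    ∃ d : ℕ, d = t * ⌈(t : ℝ) / Real.log 2⌉₊ * ⌈Real.logb 2 (4 * m)⌉₊ ∧
      ∃ S : Fin m → Finset (Fin d),
        (∀ i, (S i).card = t) ∧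
        ∀ i : Fin m,
          ∑ j ∈ Finset.univ.filter (fun j : Fin m => j < i), 2 ^ ((S i ∩ S j).card)
            ≤ m - 1 := by
  classical
  set a := ⌈(t : ℝ) / Real.log 2⌉₊ with haa
  set K := ⌈Real.logb 2 (4 * m)⌉₊ with hKK
  refine ⟨t * a * K, rfl, ?_⟩
  have hlog2 : 0 < Real.log 2 := Real.log_pos (by norm_num)
  have ha1 : 1 ≤ a := by
    rw [haa]
    exact Nat.one_le_iff_ne_zero.mpr (by
      rw [Ne, Nat.ceil_eq_zero, not_le]
      positivity)
  have hta : (t : ℝ) ≤ a * Real.log 2 := by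
    have h1 := Nat.le_ceil ((t : ℝ) / Real.log 2)
    rw [div_le_iff₀ hlog2] at h1
    exact_mod_cast h1
  set L := Nat.log 2 m with hLL
  have hLK : L + 2 ≤ K := by
    have h2L : (2:ℝ) ^ L ≤ m := by exact_mod_cast Nat.pow_log_le_self 2 (by omega)
    have hm0 : (0:ℝ) < m := by exact_mod_cast hm
    have hlb : (L : ℝ) + 2 ≤ Real.logb 2 (4 * m) := by
      have h4 : Real.logb 2 (4 * m) = 2 + Real.logb 2 m := by
        rw [Real.logb_mul (by norm_num) (by positivity)]
        congr 1
        rw [show (4:ℝ) = 2 ^ (2:ℕ) by norm_num, Real.logb_pow, Real.logb_self_eq_one] <;> norm_num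
      rw [h4]
      have : (L : ℝ) ≤ Real.logb 2 m := by
        rw [show (L:ℝ) = Real.logb 2 ((2:ℝ) ^ L) by rw [Real.logb_pow, Real.logb_self_eq_one] <;> norm_num]
        exact Real.logb_le_logb_of_le (by norm_num) (by positivity) h2L
      linarith
    have h2 := Nat.le_ceil (Real.logb 2 (4 * m))
    have : ((L + 2 : ℕ) : ℝ) ≤ (K : ℝ) := by push_cast; linarith
    exact_mod_cast this
  obtain ⟨T, hTc, hTs⟩ := weak_design_family t a ha1 hta m
  have hd : Fintype.card (Fin K × Fin t × Fin a) = t * a * K := by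
    simp only [Fintype.card_prod, Fintype.card_fin]; ring
  let e : (Fin K × Fin t × Fin a) ≃ Fin (t * a * K) := Fintype.equivFinOfCardEq hd
  set E : Fin m → ℕ := fun i => Nat.log 2 (m - i.val) with hEE
  have hE_le : ∀ i : Fin m, E i ≤ L := fun i => Nat.log_mono_right (by omega)
  have hkvK : ∀ i : Fin m, L - E i < K := fun i => by
    have := Nat.sub_le L (E i); omega
  set kv : Fin m → ℕ := fun i => L - E i with hkv
  set pv : Fin m → ℕ := fun i => i.val - (m + 1 - 2 ^ (E i + 1)) with hpv
  set g : Fin m → (Fin t × Fin a) → Fin (t * a * K) :=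
    fun i x => e (⟨kv i, hkvK i⟩, x) with hgdef
  have hg_inj : ∀ i, Function.Injective (g i) := by
    intro i x y h
    have h2 := e.injective h
    exact (Prod.mk.injEq _ _ _ _).mp h2 |>.2
  set S : Fin m → Finset (Fin (t * a * K)) := fun i => (T (pv i)).image (g i) with hS
  have hfacts : ∀ i : Fin m, 2 ^ E i ≤ m - i.val ∧ m - i.val < 2 ^ (E i + 1)
      ∧ 2 ^ (E i + 1) = 2 * 2 ^ E i := by
    intro i
    refine ⟨Nat.pow_log_le_self 2 (by omega), Nat.lt_pow_succ_log_self one_lt_two _, by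
      rw [pow_succ]; ring⟩
  have hkv_app : ∀ i : Fin m, kv i = L - E i := fun i => rfl
  have hpv_app : ∀ i : Fin m, pv i = i.val - (m + 1 - 2 ^ (E i + 1)) := fun i => rfl
  have hpv_le : ∀ i : Fin m, pv i ≤ i.val := fun i => Nat.sub_le _ _
  refine ⟨S, ?_, ?_⟩
  · intro i
    rw [hS]
    rw [Finset.card_image_of_injective _ (hg_inj i)]
    exact hTc (pv i) (by have := hpv_le i; omega)
  · intro i
    obtain ⟨hpowle, hpowlt, hpow2⟩ := hfacts i
    have him : i.val < m := i.2
    set s := m + 1 - 2 ^ (E i + 1) with hsdef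
    have hsi : s ≤ i.val := by omega
    have hpvi : pv i = i.val - s := hpv_app i
    have hip : i.val + pv i ≤ m - 1 := by rw [hpvi]; omega
    -- block characterization
    have hblock : ∀ j : Fin m, j.val < i.val → (kv j = kv i ↔ s ≤ j.val) := by
      intro j hj
      have hEj_le := hE_le j
      have hEi_le := hE_le i
      obtain ⟨hjle, hjlt, hjpow2⟩ := hfacts j
      have hkvj := hkv_app j
      have hkvi := hkv_app i
      constructor
      · intro hk
        have hEeq : E j = E i := by omega
        rw [hEeq] at hjlt
        omega
      · intro hsj
        have hEeq : E j = E i :=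
          Nat.log_eq_of_pow_le_of_lt_pow (b := 2) (m := E i) (n := m - j.val)
            (by omega) (by omega)
        omega
    have hEeq_of : ∀ j : Fin m, j.val < i.val → s ≤ j.val → E j = E i := by
      intro j hj hsj
      exact Nat.log_eq_of_pow_le_of_lt_pow (b := 2) (m := E i) (n := m - j.val)
        (by obtain ⟨hjle, hjlt, hjpow2⟩ := hfacts j; omega)
        (by obtain ⟨hjle, hjlt, hjpow2⟩ := hfacts j; omega)
    -- intersections
    have hdiff : ∀ j : Fin m, kv j ≠ kv i → (S i ∩ S j).card = 0 := by
      intro j hne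
      rw [Finset.card_eq_zero, Finset.eq_empty_iff_forall_notMem]
      intro x hx
      rw [Finset.mem_inter] at hx
      obtain ⟨hx1, hx2⟩ := hx
      simp only [hS, Finset.mem_image] at hx1 hx2
      obtain ⟨y, _, hy⟩ := hx1
      obtain ⟨z, _, hz⟩ := hx2
      rw [← hz] at hy
      have h2 := e.injective hy
      have h3 : (⟨kv i, hkvK i⟩ : Fin K) = ⟨kv j, hkvK j⟩ := ((Prod.mk.injEq _ _ _ _).mp h2).1
      exact hne (congrArg Fin.val h3).symm
    have hsame : ∀ j : Fin m, kv j = kv i →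
        (S i ∩ S j).card = (T (pv i) ∩ T (pv j)).card := by
      intro j hk
      have hgeq : g j = g i := by
        funext x
        simp only [hgdef]
        congr 2
        exact Fin.mk_eq_mk.mpr hk
      rw [hS]
      simp only
      rw [hgeq, ← Finset.image_inter _ _ (hg_inj i),
        Finset.card_image_of_injective _ (hg_inj i)]
    -- reindex the sum
    set f : ℕ → ℕ := fun q => if h : q < m then 2 ^ ((S i ∩ S ⟨q, h⟩).card) else 0 with hf
    have hreindex : ∑ j ∈ Finset.univ.filter (fun j : Fin m => j < i), 2 ^ ((S i ∩ S j).card)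
        = ∑ q ∈ Finset.range i.val, f q := by
      apply Finset.sum_nbij' (i := fun j : Fin m => j.val)
        (j := fun q : ℕ => (⟨min q (m-1), by omega⟩ : Fin m))
      · intro j hj
        simp only [Finset.mem_filter, Finset.mem_univ, true_and, Fin.lt_def] at hj
        exact Finset.mem_range.mpr hj
      · intro q hq
        have hq' := Finset.mem_range.mp hq
        simp only [Finset.mem_filter, Finset.mem_univ, true_and, Fin.lt_def]
        omega
      · intro j hj
        simp only [Finset.mem_filter, Finset.mem_univ, true_and, Fin.lt_def] at hj
        apply Fin.ext
        show min j.val (m - 1) = j.val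
        omega
      · intro q hq
        have hq' := Finset.mem_range.mp hq
        show min q (m - 1) = q
        omega
      · intro j hj
        simp only [Finset.mem_filter, Finset.mem_univ, true_and, Fin.lt_def] at hj
        rw [hf]
        simp only [j.2, dif_pos]
    have hsplit : ∑ q ∈ Finset.range i.val, f q
        = (∑ q ∈ Finset.Ico 0 s, f q) + ∑ q ∈ Finset.Ico s i.val, f q := by
      rw [Finset.range_eq_Ico, ← Finset.sum_Ico_consecutive _ (Nat.zero_le s) hsi]
    have hpart1 : ∑ q ∈ Finset.Ico 0 s, f q = s := by
      have hterm : ∀ q ∈ Finset.Ico 0 s, f q = 1 := by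
        intro q hq
        have hq' := Finset.mem_Ico.mp hq
        have hqm : q < m := by omega
        have hqi : q < i.val := by omega
        rw [hf]
        simp only [hqm, dif_pos]
        have hne : kv ⟨q, hqm⟩ ≠ kv i := by
          intro hcontra
          have h5 := (hblock ⟨q, hqm⟩ hqi).mp hcontra
          have h6 : s ≤ q := h5
          omega
        rw [hdiff ⟨q, hqm⟩ hne, pow_zero]
      rw [Finset.sum_congr rfl hterm, Finset.sum_const, Nat.card_Ico, smul_eq_mul]
      omega
    have hpart2 : ∑ q ∈ Finset.Ico s i.val, f q ≤ 2 * pv i := by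
      have hterm : ∀ q ∈ Finset.Ico s i.val, f q = 2 ^ ((T (pv i) ∩ T (q - s)).card) := by
        intro q hq
        have hq' := Finset.mem_Ico.mp hq
        have hqm : q < m := by omega
        rw [hf]
        simp only [hqm, dif_pos]
        have hkq : kv ⟨q, hqm⟩ = kv i :=
          (hblock ⟨q, hqm⟩ (by show q < i.val; omega)).mpr (by show s ≤ q; omega)
        rw [hsame ⟨q, hqm⟩ hkq]
        have hEq : E ⟨q, hqm⟩ = E i :=
          hEeq_of ⟨q, hqm⟩ (by show q < i.val; omega) (by show s ≤ q; omega)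
        have hpq : pv ⟨q, hqm⟩ = q - s := by
          rw [hpv_app ⟨q, hqm⟩, hEq, ← hsdef]
        rw [hpq]
      rw [Finset.sum_congr rfl hterm, Finset.sum_Ico_eq_sum_range]
      simp only [Nat.add_sub_cancel_left]
      rw [← hpvi]
      exact hTs (pv i) (by have := hpv_le i; omega)
    rw [hreindex, hsplit, hpart1]
    have h6 := hpart2
    omega
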